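/- Convergence of critical point regularization: Under Condition (C1)–(C6), let y ∈ Y admit an 𝒮-solution (i.e. some u with 𝒮(u,y)=0), yₖ with 𝒟(yₖ,y) ≤ δₖ → 0, and αₖ = α(δₖ) with αₖ → 0 and δₖ^p/αₖ → 0. Suppose zₖ ∈ ∂_{αₖφ}(𝒮(·,yₖ)+αₖℛ)(xₖ) with ‖zₖ‖/αₖ → 0 and ⟨zₖ,xₖ⟩ ≤ 0. Then (xₖ) has a weakly convergent subsequence and every weak cluster point x⁺ is an 𝒮-solution of y satisfying ℛ(x⁺) ≤ ℛ(u) + φ(u) for every 𝒮-solution u of y. -/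

import Mathlib

open Filter NormedSpace TopologicalSpace Function

/-- A continuous linear functional vanishing on a closed submodule and positive at a point
outside of it. -/
lemma exists_vanishing_functional {E : Type*} [NormedAddCommGroup E] [NormedSpace ℝ E]
    (M : Submodule ℝ E) (hM : IsClosed (M : Set E)) {v : E} (hv : v ∉ M) :
    ∃ g : E →L[ℝ] ℝ, (∀ a ∈ M, g a = 0) ∧ 0 < g v := by
  obtain ⟨f, u, hfu, hufv⟩ := geometric_hahn_banach_closed_point M.convex hM hv
  have hvan : ∀ a ∈ M, f a = 0 := by
    intro a ha
    by_contra hne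
    have hmem : ((u + 1) / f a) • a ∈ M := M.smul_mem _ ha
    have := hfu _ hmem
    rw [map_smul, smul_eq_mul, div_mul_cancel₀ _ hne] at this
    linarith
  have h0 : f v > 0 := by
    have h0' := hvan 0 M.zero_mem
    have := hfu 0 M.zero_mem
    rw [h0'] at this
    linarith [map_zero f, hufv]
  exact ⟨f, hvan, h0⟩

/-- The restriction map from the dual of `E` to the dual of a submodule. -/
noncomputable def restrDual {E : Type*} [NormedAddCommGroup E] [NormedSpace ℝ E]
    (W : Submodule ℝ E) : StrongDual ℝ E →L[ℝ] StrongDual ℝ ↥W :=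
  LinearMap.mkContinuous
    { toFun := fun (f : StrongDual ℝ E) => f.comp W.subtypeL
      map_add' := fun f g => by ext a; simp
      map_smul' := fun c f => by ext a; simp }
    1
    (fun f => by
      simp only [LinearMap.coe_mk, AddHom.coe_mk, one_mul]
      refine ContinuousLinearMap.opNorm_le_bound _ (norm_nonneg f) (fun a => ?_)
      simpa using f.le_opNorm (a : E))

@[simp] lemma restrDual_apply {E : Type*} [NormedAddCommGroup E] [NormedSpace ℝ E]
    (W : Submodule ℝ E) (f : StrongDual ℝ E) (a : ↥W) : restrDual W f a = f a := rfl

/-- A closed subspace of a reflexive space is reflexive. -/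
lemma subspace_reflexive {E : Type*} [NormedAddCommGroup E] [NormedSpace ℝ E]
    (hrefl : Surjective (inclusionInDoubleDual ℝ E))
    (W : Submodule ℝ E) (hW : IsClosed (W : Set E)) :
    Surjective (inclusionInDoubleDual ℝ ↥W) := by
  intro Λ
  obtain ⟨xs, hxs⟩ := hrefl (Λ.comp (restrDual W))
  have hxs' : ∀ f : StrongDual ℝ E, f xs = Λ (restrDual W f) := by
    intro f
    rw [← dual_def ℝ E xs f, hxs]; rfl
  have hxsW : xs ∈ W := by
    by_contra hxsW
    obtain ⟨g, hg0, hgpos⟩ := exists_vanishing_functional W hW hxsW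
    have : restrDual W g = 0 := by
      ext a; simpa using hg0 a a.2
    have h2 := hxs' g
    rw [this, map_zero] at h2
    linarith
  refine ⟨⟨xs, hxsW⟩, ?_⟩
  ext φ
  obtain ⟨G, hG, -⟩ := exists_extension_norm_eq W φ
  have hres : restrDual W G = φ := by ext a; simp [hG a]
  rw [dual_def]
  calc φ ⟨xs, hxsW⟩ = G xs := (hG ⟨xs, hxsW⟩).symm
    _ = Λ (restrDual W G) := hxs' G
    _ = Λ φ := by rw [hres]

/-- If the dual of a normed space is separable, then so is the space itself. -/
lemma separable_of_dual_separable {E : Type*} [NormedAddCommGroup E] [NormedSpace ℝ E]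
    (h : SeparableSpace (StrongDual ℝ E)) : SeparableSpace E := by
  haveI := h
  haveI : Nonempty (StrongDual ℝ E) := ⟨0⟩
  set Λ : ℕ → StrongDual ℝ E := denseSeq (StrongDual ℝ E)
  have hΛ : DenseRange Λ := denseRange_denseSeq (StrongDual ℝ E)
  -- pick near-norming vectors
  have hex : ∀ n, ∃ v : E, ‖v‖ ≤ 1 ∧ ‖Λ n‖ / 2 ≤ ‖Λ n v‖ := by
    intro n
    by_cases h0 : Λ n = 0
    · exact ⟨0, by simp, by simp [h0]⟩
    · have hpos : 0 < ‖Λ n‖ := norm_pos_iff.mpr h0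
      obtain ⟨v, hv1, hv2⟩ := (Λ n).exists_lt_apply_of_lt_opNorm (r := ‖Λ n‖ / 2) (by linarith)
      exact ⟨v, hv1.le, hv2.le⟩
  choose v hv1 hv2 using hex
  set M : Submodule ℝ E := (Submodule.span ℝ (Set.range v)).topologicalClosure
  have hMtop : M = ⊤ := by
    by_contra hne
    obtain ⟨w, hw⟩ : ∃ w : E, w ∉ M := by
      by_contra hall
      push_neg at hall
      exact hne (Submodule.eq_top_iff'.mpr hall)
    obtain ⟨g, hg0, hgpos⟩ := exists_vanishing_functional M
      (Submodule.isClosed_topologicalClosure _) hw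
    have hgne : ‖g‖ ≠ 0 := by
      intro hg
      rw [ContinuousLinearMap.opNorm_zero_iff] at hg
      rw [hg] at hgpos; simp at hgpos
    set g' : StrongDual ℝ E := ‖g‖⁻¹ • g with hg'
    have hg'1 : ‖g'‖ = 1 := by
      rw [hg', norm_smul, norm_inv, norm_norm, inv_mul_cancel₀ hgne]
    obtain ⟨n, hn⟩ := Metric.denseRange_iff.mp hΛ g' (1/4) (by norm_num)
    have hdist : ‖Λ n - g'‖ < 1/4 := by
      rw [show ‖Λ n - g'‖ = dist g' (Λ n) by rw [dist_eq_norm, norm_sub_rev]]; exact hn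
    have hΛn : 3/4 ≤ ‖Λ n‖ := by
      have h1 := norm_sub_norm_le g' (Λ n)
      rw [norm_sub_rev] at h1
      linarith
    have hvM : v n ∈ M := Submodule.le_topologicalClosure _
      (Submodule.subset_span (Set.mem_range_self n))
    have hg'v : g' (v n) = 0 := by
      rw [hg']; simp [hg0 _ hvM]
    have hbig : 3/8 ≤ ‖Λ n (v n)‖ := le_trans (by linarith) (hv2 n)
    have hsmall : ‖Λ n (v n)‖ ≤ 1/4 := by
      have : Λ n (v n) = (Λ n - g') (v n) := by simp [hg'v]
      rw [this]
      calc ‖(Λ n - g') (v n)‖ ≤ ‖Λ n - g'‖ * ‖v n‖ := (Λ n - g').le_opNorm _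
        _ ≤ (1/4) * 1 := by
            apply mul_le_mul hdist.le (hv1 n) (norm_nonneg _) (by norm_num)
        _ = 1/4 := by norm_num
    linarith
  have hsep : IsSeparable (M : Set E) :=
    ((Set.countable_range v).isSeparable.span).closure
  rw [hMtop] at hsep
  have : IsSeparable (Set.univ : Set E) := by
    rw [← Submodule.top_coe (R := ℝ) (M := E)]; exact hsep
  exact TopologicalSpace.isSeparable_univ_iff.mp this

/-- Weak sequential compactness of bounded sequences in a reflexive space. -/
lemma weak_seq_compact {E : Type*} [NormedAddCommGroup E] [NormedSpace ℝ E]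
    (hrefl : Surjective (inclusionInDoubleDual ℝ E))
    (x : ℕ → E) (B : ℝ) (hB : ∀ k, ‖x k‖ ≤ B) :
    ∃ (σ : ℕ → ℕ) (xp : E), StrictMono σ ∧
      ∀ f : E →L[ℝ] ℝ, Tendsto (fun k => f (x (σ k))) atTop (nhds (f xp)) := by
  have hB0 : 0 ≤ B := le_trans (norm_nonneg _) (hB 0)
  set W : Submodule ℝ E := (Submodule.span ℝ (Set.range x)).topologicalClosure with hWdef
  have hWc : IsClosed (W : Set E) := Submodule.isClosed_topologicalClosure _
  have hxW : ∀ k, x k ∈ W := fun k =>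
    Submodule.le_topologicalClosure _ (Submodule.subset_span (Set.mem_range_self k))
  haveI hsepW : SeparableSpace ↥W := by
    have h1 : IsSeparable (W : Set E) := by
      rw [hWdef, Submodule.topologicalClosure_coe]
      exact ((Set.countable_range x).isSeparable.span).closure
    exact h1.separableSpace
  haveI hsepDD : SeparableSpace (StrongDual ℝ (StrongDual ℝ ↥W)) := by
    have hsurj := subspace_reflexive hrefl W hWc
    exact hsurj.denseRange.separableSpace (inclusionInDoubleDual ℝ ↥W).continuous
  haveI hsepD : SeparableSpace (StrongDual ℝ ↥W) := separable_of_dual_separable (E := StrongDual ℝ ↥W) hsepDD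
  haveI : Nonempty (StrongDual ℝ ↥W) := ⟨0⟩
  set d : ℕ → StrongDual ℝ ↥W := denseSeq (StrongDual ℝ ↥W) with hd
  have hdense : DenseRange d := denseRange_denseSeq (StrongDual ℝ ↥W)
  choose g hg hgn using fun m => exists_extension_norm_eq W (d m)
  -- diagonal argument via sequential compactness of a compact metrizable product
  set s : Set (ℕ → ℝ) := Set.pi Set.univ (fun m => Set.Icc (-(‖g m‖ * B)) (‖g m‖ * B)) with hs
  have hscompact : IsCompact s := isCompact_univ_pi (fun m => isCompact_Icc)
  have hmem : ∀ k, (fun m => g m (x k)) ∈ s := by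
    intro k
    rw [hs, Set.mem_univ_pi]
    intro m
    have h1 : ‖g m (x k)‖ ≤ ‖g m‖ * B := by
      calc ‖g m (x k)‖ ≤ ‖g m‖ * ‖x k‖ := (g m).le_opNorm _
        _ ≤ ‖g m‖ * B := mul_le_mul_of_nonneg_left (hB k) (norm_nonneg _)
    rw [Real.norm_eq_abs, abs_le] at h1
    exact ⟨h1.1, h1.2⟩
  obtain ⟨ℓ, -, σ, hσ, htend⟩ := hscompact.isSeqCompact hmem
  have hcoord : ∀ m, Tendsto (fun k => g m (x (σ k))) atTop (nhds (ℓ m)) := by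
    intro m
    exact (tendsto_pi_nhds.mp htend) m
  -- every functional converges along the subsequence
  have hcauchy : ∀ f : StrongDual ℝ E, CauchySeq (fun k => f (x (σ k))) := by
    intro f
    rw [Metric.cauchySeq_iff]
    intro ε hε
    set fW : StrongDual ℝ ↥W := restrDual W f
    obtain ⟨m, hm⟩ := Metric.denseRange_iff.mp hdense fW (ε / (3 * (B + 1)))
      (by positivity)
    have hfg : ∀ k, ‖f (x k) - g m (x k)‖ ≤ ε / (3 * (B + 1)) * B := by
      intro k
      have h1 : f (x k) - g m (x k) = (fW - d m) (⟨x k, hxW k⟩ : ↥W) := by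
        simp [fW, hg m ⟨x k, hxW k⟩]
      rw [h1]
      calc ‖(fW - d m) (⟨x k, hxW k⟩ : ↥W)‖ ≤ ‖fW - d m‖ * ‖(⟨x k, hxW k⟩ : ↥W)‖ :=
            (fW - d m).le_opNorm _
        _ ≤ ε / (3 * (B + 1)) * B := by
            apply mul_le_mul _ _ (norm_nonneg _) (by positivity)
            · exact le_trans (le_of_eq (dist_eq_norm fW (d m)).symm) hm.le
            · exact hB k
    -- the middle term: g m along the subsequence is Cauchy
    have hgm : CauchySeq (fun k => g m (x (σ k))) := (hcoord m).cauchySeq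
    rw [Metric.cauchySeq_iff] at hgm
    obtain ⟨N, hN⟩ := hgm (ε / 3) (by linarith)
    refine ⟨N, fun a ha b hb => ?_⟩
    have h1 := hfg (σ a)
    have h2 := hfg (σ b)
    have h3 := hN a ha b hb
    rw [Real.dist_eq] at h3 ⊢
    rw [Real.norm_eq_abs] at h1 h2
    have hfrac : ε / (3 * (B + 1)) * B ≤ ε / 3 := by
      rw [div_mul_eq_mul_div, div_le_div_iff₀ (by positivity) (by norm_num)]
      ring_nf
      nlinarith
    have habs : |f (x (σ a)) - f (x (σ b))| ≤
        |f (x (σ a)) - g m (x (σ a))| + |g m (x (σ a)) - g m (x (σ b))| +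
          |g m (x (σ b)) - f (x (σ b))| := by
      have := abs_sub_abs_le_abs_sub (f (x (σ a))) (f (x (σ b)))
      calc |f (x (σ a)) - f (x (σ b))| = |(f (x (σ a)) - g m (x (σ a))) +
            (g m (x (σ a)) - g m (x (σ b))) + (g m (x (σ b)) - f (x (σ b)))| := by ring_nf
        _ ≤ _ := by
            refine le_trans (abs_add_le _ _) ?_
            exact add_le_add (abs_add_le _ _) le_rfl
    have h2' : |g m (x (σ b)) - f (x (σ b))| ≤ ε / (3 * (B + 1)) * B := by
      rw [abs_sub_comm]; exact h2
    calc |f (x (σ a)) - f (x (σ b))| ≤ _ := habs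
      _ < ε := by linarith
  -- build the limiting functional
  have hconv : ∀ f : StrongDual ℝ E, ∃ l : ℝ, Tendsto (fun k => f (x (σ k))) atTop (nhds l) :=
    fun f => cauchySeq_tendsto_of_complete (hcauchy f)
  choose Φ hΦ using hconv
  have hΦadd : ∀ f h : StrongDual ℝ E, Φ (f + h) = Φ f + Φ h := by
    intro f h
    refine tendsto_nhds_unique (hΦ (f + h)) ?_
    simpa using (hΦ f).add (hΦ h)
  have hΦsmul : ∀ (c : ℝ) (f : StrongDual ℝ E), Φ (c • f) = c • Φ f := by
    intro c f
    refine tendsto_nhds_unique (hΦ (c • f)) ?_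
    simpa [smul_eq_mul] using (hΦ f).const_mul c
  set ΦL : StrongDual ℝ E →L[ℝ] ℝ := LinearMap.mkContinuous
    { toFun := Φ, map_add' := hΦadd, map_smul' := hΦsmul } B
    (fun f => by
      simp only [LinearMap.coe_mk, AddHom.coe_mk]
      have : Tendsto (fun k => ‖f (x (σ k))‖) atTop (nhds ‖Φ f‖) := (hΦ f).norm
      refine le_of_tendsto this (Eventually.of_forall (fun k => ?_))
      calc ‖f (x (σ k))‖ ≤ ‖f‖ * ‖x (σ k)‖ := f.le_opNorm _
        _ ≤ ‖f‖ * B := mul_le_mul_of_nonneg_left (hB _) (norm_nonneg _)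
        _ = B * ‖f‖ := mul_comm _ _)
  obtain ⟨xp, hxp⟩ := hrefl ΦL
  refine ⟨σ, xp, hσ, fun f => ?_⟩
  have hfxp : f xp = Φ f := by
    rw [← dual_def ℝ E xp f, hxp]; rfl
  rw [hfxp]
  exact hΦ f

lemma liminf_aux {a b : ℕ → ℝ} {xv L : ℝ} (h0 : ∀ k, 0 ≤ a k) (hab : ∀ k, a k ≤ b k)
    (hb : Tendsto b atTop (nhds L)) (hx : xv ≤ liminf a atTop) : xv ≤ L := by
  have hu : IsBoundedUnder (· ≥ ·) atTop a := Filter.isBoundedUnder_of ⟨0, h0⟩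
  have hv : IsCoboundedUnder (· ≥ ·) atTop b := hb.isBoundedUnder_le.isCoboundedUnder_ge
  have h4 := liminf_le_liminf (Eventually.of_forall hab) hu hv
  rw [hb.liminf_eq] at h4
  linarith

/-- convergence of critical point regularization as the noise
level tends to zero. -/
theorem critical_point_convergence
    {X : Type*} [NormedAddCommGroup X] [NormedSpace ℝ X] [CompleteSpace X]
    -- X is reflexive
    (hrefl : Function.Surjective (NormedSpace.inclusionInDoubleDual ℝ X))
    {Y : Type*} [MetricSpace Y]
    (S : X → Y → ℝ) (Rg : X → ℝ) (φ : X → ℝ)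
    (hSnn : ∀ x y, 0 ≤ S x y) (hRnn : ∀ x, 0 ≤ Rg x) (hφ : ∀ u, 0 ≤ φ u)
    -- S and R weakly sequentially lower semi-continuous
    (hSlsc : ∀ (w : ℕ → X) (wlim : X) (y : Y),
      (∀ f : X →L[ℝ] ℝ, Tendsto (fun k => f (w k)) atTop (nhds (f wlim))) →
      S wlim y ≤ liminf (fun k => S (w k) y) atTop)
    (hRlsc : ∀ (w : ℕ → X) (wlim : X),
      (∀ f : X →L[ℝ] ℝ, Tendsto (fun k => f (w k)) atTop (nhds (f wlim))) →
      Rg wlim ≤ liminf (fun k => Rg (w k)) atTop)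
    -- S convex in its first argument and continuous in its second argument
    (hSconv : ∀ y : Y, ConvexOn ℝ Set.univ (fun x => S x y))
    (hScont : ∀ x : X, Continuous (S x))
    -- the comparison condition (C5)
    (C : ℝ) (hC : 0 < C) (p : ℝ) (hp : 1 ≤ p)
    (hcomp : ∀ (z : X) (y y' : Y), S z y ≤ C * (S z y' + dist y y' ^ p))
    -- coercivity of the Tikhonov functional
    (hcoer : ∀ (α : ℝ), 0 < α → ∀ y : Y, ∀ M : ℝ, ∃ ρ : ℝ, ∀ x : X,
      ρ ≤ ‖x‖ → M ≤ S x y + α * Rg x)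
    -- exact data with an S-solution
    (y : Y) (hsol : ∃ u, S u y = 0)
    -- noisy data and parameter choice
    (δ : ℕ → ℝ) (hδpos : ∀ k, 0 < δ k) (hδ : Tendsto δ atTop (nhds 0))
    (yk : ℕ → Y) (hyk : ∀ k, dist (yk k) y ≤ δ k)
    (α : ℕ → ℝ) (hαpos : ∀ k, 0 < α k) (hα : Tendsto α atTop (nhds 0))
    (hδα : Tendsto (fun k => δ k ^ p / α k) atTop (nhds 0))
    -- inexact critical points
    (x : ℕ → X) (z : ℕ → X →L[ℝ] ℝ)
    (hz : ∀ k, ∀ u, (S (x k) (yk k) + α k * Rg (x k)) + z k (u - x k) ≤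
      (S u (yk k) + α k * Rg u) + α k * φ u)
    (hznorm : Tendsto (fun k => ‖z k‖ / α k) atTop (nhds 0))
    (hzx : ∀ k, z k (x k) ≤ 0) :
    (∃ (σ : ℕ → ℕ) (xp : X), StrictMono σ ∧
        ∀ f : X →L[ℝ] ℝ, Tendsto (fun k => f (x (σ k))) atTop (nhds (f xp))) ∧
      (∀ (σ : ℕ → ℕ) (xp : X), StrictMono σ →
        (∀ f : X →L[ℝ] ℝ, Tendsto (fun k => f (x (σ k))) atTop (nhds (f xp))) →
        S xp y = 0 ∧ ∀ u, S u y = 0 → Rg xp ≤ Rg u + φ u) := by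
  obtain ⟨u₀, hu₀⟩ := hsol
  have hαne : ∀ k, α k ≠ 0 := fun k => (hαpos k).ne'
  -- quantitative key estimate
  have key : ∀ u : X, S u y = 0 → ∀ k, S (x k) (yk k) + α k * Rg (x k) ≤
      C * δ k ^ p + α k * (Rg u + φ u) + ‖z k‖ * ‖u‖ := by
    intro u hu k
    have h1 := hz k u
    have hcomp1 := hcomp u (yk k) y
    rw [hu] at hcomp1
    have hd : dist (yk k) y ^ p ≤ δ k ^ p :=
      Real.rpow_le_rpow dist_nonneg (hyk k) (by linarith)
    have h2 : S u (yk k) ≤ C * δ k ^ p := by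
      calc S u (yk k) ≤ C * (0 + dist (yk k) y ^ p) := hcomp1
        _ = C * dist (yk k) y ^ p := by ring
        _ ≤ C * δ k ^ p := mul_le_mul_of_nonneg_left hd hC.le
    have h3 : -(‖z k‖ * ‖u‖) ≤ z k (u - x k) := by
      have ha : ‖z k u‖ ≤ ‖z k‖ * ‖u‖ := (z k).le_opNorm u
      rw [Real.norm_eq_abs, abs_le] at ha
      have hb := hzx k
      rw [map_sub]
      linarith [ha.1]
    have h4 : α k * Rg u + α k * φ u = α k * (Rg u + φ u) := by ring
    linarith
  -- basic limits
  have hδp : Tendsto (fun k => δ k ^ p) atTop (nhds 0) := by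
    have h1 := hδα.mul hα
    rw [mul_zero] at h1
    refine h1.congr (fun k => ?_)
    exact div_mul_cancel₀ _ (hαne k)
  have hzn : Tendsto (fun k => ‖z k‖) atTop (nhds 0) := by
    have h1 := hznorm.mul hα
    rw [mul_zero] at h1
    refine h1.congr (fun k => ?_)
    exact div_mul_cancel₀ _ (hαne k)
  -- bounding sequences
  set sb : X → ℕ → ℝ := fun u k => C * δ k ^ p + α k * (Rg u + φ u) + ‖z k‖ * ‖u‖ with hsbdef
  set rb : X → ℕ → ℝ := fun u k =>
    C * (δ k ^ p / α k) + (Rg u + φ u) + (‖z k‖ / α k) * ‖u‖ with hrbdef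
  set tb : X → ℕ → ℝ := fun u k => C * (sb u k + δ k ^ p) with htbdef
  have hsb : ∀ u, Tendsto (sb u) atTop (nhds 0) := by
    intro u
    have := ((hδp.const_mul C).add (hα.mul_const (Rg u + φ u))).add (hzn.mul_const ‖u‖)
    simpa using this
  have hrb : ∀ u, Tendsto (rb u) atTop (nhds (Rg u + φ u)) := by
    intro u
    have := ((hδα.const_mul C).add_const (Rg u + φ u)).add (hznorm.mul_const ‖u‖)
    simpa using this
  have htb : ∀ u, Tendsto (tb u) atTop (nhds 0) := by
    intro u
    have := ((hsb u).add hδp).const_mul C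
    simpa using this
  -- pointwise bounds
  have hSb : ∀ u, S u y = 0 → ∀ k, S (x k) (yk k) ≤ sb u k := by
    intro u hu k
    have h1 := key u hu k
    have h2 : 0 ≤ α k * Rg (x k) := mul_nonneg (hαpos k).le (hRnn _)
    simp only [hsbdef]
    linarith
  have hRb : ∀ u, S u y = 0 → ∀ k, Rg (x k) ≤ rb u k := by
    intro u hu k
    have h1 := key u hu k
    have h2 : α k * rb u k = C * δ k ^ p + α k * (Rg u + φ u) + ‖z k‖ * ‖u‖ := by
      have hne := hαne k
      simp only [hrbdef]
      field_simp
    have h3 : α k * Rg (x k) ≤ α k * rb u k := by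
      rw [h2]; linarith [hSnn (x k) (yk k)]
    exact le_of_mul_le_mul_left h3 (hαpos k)
  have hTb : ∀ u, S u y = 0 → ∀ k, S (x k) y ≤ tb u k := by
    intro u hu k
    have hd : dist y (yk k) ^ p ≤ δ k ^ p := by
      rw [dist_comm]
      exact Real.rpow_le_rpow dist_nonneg (hyk k) (by linarith)
    have h1 := hcomp (x k) y (yk k)
    have h2 : S (x k) (yk k) + dist y (yk k) ^ p ≤ sb u k + δ k ^ p :=
      add_le_add (hSb u hu k) hd
    calc S (x k) y ≤ C * (S (x k) (yk k) + dist y (yk k) ^ p) := h1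
      _ ≤ C * (sb u k + δ k ^ p) := mul_le_mul_of_nonneg_left h2 hC.le
      _ = tb u k := rfl
  -- boundedness of the sequence
  obtain ⟨TS, hTS⟩ := (htb u₀).bddAbove_range
  obtain ⟨TR, hTR⟩ := (hrb u₀).bddAbove_range
  have hTS' : ∀ k, tb u₀ k ≤ TS := fun k => hTS (Set.mem_range_self k)
  have hTR' : ∀ k, rb u₀ k ≤ TR := fun k => hTR (Set.mem_range_self k)
  obtain ⟨ρ, hρ⟩ := hcoer 1 one_pos y (TS + TR + 1)
  have hxb : ∀ k, ‖x k‖ ≤ ρ := by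
    intro k
    by_contra hk
    push_neg at hk
    have h1 := hρ (x k) hk.le
    have h2 := hTb u₀ hu₀ k
    have h3 := hRb u₀ hu₀ k
    have h4 := hTS' k
    have h5 := hTR' k
    rw [one_mul] at h1
    linarith
  constructor
  · exact weak_seq_compact hrefl x ρ hxb
  · intro σ xp hσ hweak
    have hσat : Tendsto σ atTop atTop := hσ.tendsto_atTop
    have hS : S xp y = 0 := by
      have h1 := hSlsc (fun k => x (σ k)) xp y hweak
      have h2 : S xp y ≤ 0 :=
        liminf_aux (fun k => hSnn (x (σ k)) y) (fun k => hTb u₀ hu₀ (σ k)) ((htb u₀).comp hσat) h1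
      exact le_antisymm h2 (hSnn xp y)
    refine ⟨hS, fun u hu => ?_⟩
    have h1 := hRlsc (fun k => x (σ k)) xp hweak
    exact liminf_aux (fun k => hRnn (x (σ k))) (fun k => hRb u hu (σ k)) ((hrb u).comp hσat) h1
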